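/- Under the optimal (full subsidy) policy, increasing the authority's budget does not change the freight forwarder's routing decision but decreases its total cost by exactly the budget increase: let X be a set of feasible routing solutions and, for i = 1,2, let (dᵢ,fᵢ) ∈ X be lower-level optimal for the policy (sᵢ,tᵢ) with s₁ = s₂ = 1, tᵢ ≥ 0, and budget constraints 1·fᵢ − tᵢ·dᵢ = Bᵢ, where B₁ < B₂; assume the lower-level problem is solved deterministically, so that f₁ = f₂. Writing Cᵢ := (1+tᵢ)·dᵢ + (1−sᵢ)·fᵢ for the freight forwarder's total cost, it holds that d₁ = d₂, B₁ + C₁ = B₂ + C₂, and, if d₁ > 0, then t₁ > t₂. -/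
import Mathlib


/-- Proposition 5: Under the optimal (full subsidy) policy, increasing
the budget does not change the routing decision but decreases the freight
forwarder's total cost by exactly the budget increase: with `s₁ = s₂ = 1`,
`tᵢ ≥ 0`, lower-level optimality, budget constraints `sᵢ·fᵢ − tᵢ·dᵢ = Bᵢ`,
`B₁ < B₂`, and deterministic lower level (`f₁ = f₂`), one has `d₁ = d₂`,
`B₁ + C₁ = B₂ + C₂` where `Cᵢ = (1+tᵢ)·dᵢ + (1−sᵢ)·fᵢ`, and if `d₁ > 0`
then `t₁ > t₂`. -/
theorem stmt11 (X : Set (ℝ × ℝ)) (hX : X.Nonempty)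
    (hXnn : ∀ p ∈ X, 0 ≤ p.1 ∧ 0 ≤ p.2)
    (s₁ t₁ d₁ f₁ s₂ t₂ d₂ f₂ B₁ B₂ C₁ C₂ : ℝ)
    (hs₁ : s₁ = 1) (hs₂ : s₂ = 1)
    (ht₁ : 0 ≤ t₁) (ht₂ : 0 ≤ t₂)
    (hmem₁ : (d₁, f₁) ∈ X)
    (hopt₁ : ∀ p ∈ X,
      (1 + t₁) * d₁ + (1 - s₁) * f₁ ≤ (1 + t₁) * p.1 + (1 - s₁) * p.2)
    (hmem₂ : (d₂, f₂) ∈ X)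
    (hopt₂ : ∀ p ∈ X,
      (1 + t₂) * d₂ + (1 - s₂) * f₂ ≤ (1 + t₂) * p.1 + (1 - s₂) * p.2)
    (hB₁ : s₁ * f₁ - t₁ * d₁ = B₁)
    (hB₂ : s₂ * f₂ - t₂ * d₂ = B₂)
    (hBlt : B₁ < B₂)
    (hdet : f₁ = f₂)
    (hC₁ : C₁ = (1 + t₁) * d₁ + (1 - s₁) * f₁)
    (hC₂ : C₂ = (1 + t₂) * d₂ + (1 - s₂) * f₂) :
    d₁ = d₂ ∧ B₁ + C₁ = B₂ + C₂ ∧ (0 < d₁ → t₂ < t₁) := by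
  subst hs₁ hs₂ hdet
  have h1 := hopt₁ _ hmem₂
  have h2 := hopt₂ _ hmem₁
  simp only at h1 h2
  have hd : d₁ = d₂ := by nlinarith
  refine ⟨hd, by rw [hd] at hB₁ hC₁; nlinarith, fun hpos => ?_⟩
  rw [hd] at hB₁
  nlinarith
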